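/- (Classification of marginally trapped general meridian surfaces of parabolic type.) Take f(u) = u on an open interval I ⊂ (0,∞) and g smooth on I with g' < 0, and assume the surface is of general type, i.e. g''(u) ≠ 0 for all u ∈ I (equivalently κ_m ≠ 0) and κ̄(v) ≠ 0 for all v ∈ J. Then the meridian surface of parabolic type is marginally trapped, i.e. ⟨H(u,v),H(u,v)⟩ = 0 for all (u,v) ∈ I × J, if and only if there exist real constants a ≠ 0, b, and c ≠ 0 with c − au > 0 for all u ∈ I, such that κ̄(v)² = a² for all v ∈ J (so κ̄ is constant) and g(u) = (1/(2a³))·((a²u² − 2auc)/(c − au) − 2c·ln(c − au)) + b for all u ∈ I. -/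

import Mathlib

namespace MeridianParabolic

noncomputable section

/-- The Minkowski inner product of signature (3,1) on `ℝ⁴`:
`⟨x,y⟩ = x₁y₁ + x₂y₂ + x₃y₃ − x₄y₄`. -/
def mink (x y : Fin 4 → ℝ) : ℝ := x 0 * y 0 + x 1 * y 1 + x 2 * y 2 - x 3 * y 3

/-- The first standard basis vector `e₁`. -/
def e1 : Fin 4 → ℝ := ![1, 0, 0, 0]

/-- The second standard basis vector `e₂`. -/
def e2 : Fin 4 → ℝ := ![0, 1, 0, 0]

/-- The lightlike vector `ξ₁ = (e₃ + e₄)/√2`. -/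
def xi1 : Fin 4 → ℝ := ![0, 0, 1 / Real.sqrt 2, 1 / Real.sqrt 2]

/-- The lightlike vector `ξ₂ = (−e₃ + e₄)/√2`. -/
def xi2 : Fin 4 → ℝ := ![0, 0, -(1 / Real.sqrt 2), 1 / Real.sqrt 2]

/-- The meridian surface of parabolic type
`z(u,v) = fφ cos v · e₁ + fφ sin v · e₂ + (fφ²/2 + g) ξ₁ + f ξ₂`. -/
def z (f g φ : ℝ → ℝ) (u v : ℝ) : Fin 4 → ℝ :=
  (f u * φ v * Real.cos v) • e1 + (f u * φ v * Real.sin v) • e2 +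
    (f u * (φ v) ^ 2 / 2 + g u) • xi1 + f u • xi2

/-- The partial derivative `z_u`. -/
def zu (f g φ : ℝ → ℝ) (u v : ℝ) : Fin 4 → ℝ := deriv (fun t => z f g φ t v) u

/-- The partial derivative `z_v`. -/
def zv (f g φ : ℝ → ℝ) (u v : ℝ) : Fin 4 → ℝ := deriv (fun t => z f g φ u t) v

/-- The second partial derivative `z_uu`. -/
def zuu (f g φ : ℝ → ℝ) (u v : ℝ) : Fin 4 → ℝ := deriv (fun t => zu f g φ t v) u

/-- The second partial derivative `z_uv`. -/
def zuv (f g φ : ℝ → ℝ) (u v : ℝ) : Fin 4 → ℝ := deriv (fun t => zu f g φ u t) v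

/-- The second partial derivative `z_vv`. -/
def zvv (f g φ : ℝ → ℝ) (u v : ℝ) : Fin 4 → ℝ := deriv (fun t => zv f g φ u t) v

/-- The normal field `n₁ = ((φ̇ sin v + φ cos v) e₁ + (−φ̇ cos v + φ sin v) e₂ + φ² ξ₁)/√(φ̇² + φ²)`. -/
def n1 (φ : ℝ → ℝ) (v : ℝ) : Fin 4 → ℝ :=
  (Real.sqrt ((deriv φ v) ^ 2 + (φ v) ^ 2))⁻¹ •
    ((deriv φ v * Real.sin v + φ v * Real.cos v) • e1 +
      (-(deriv φ v) * Real.cos v + φ v * Real.sin v) • e2 + (φ v) ^ 2 • xi1)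

/-- The normal field `n₂ = √(−f'/(2g')) (φ cos v e₁ + φ sin v e₂ + ((f'φ² − 2g')/(2f')) ξ₁ + ξ₂)`. -/
def n2 (f g φ : ℝ → ℝ) (u v : ℝ) : Fin 4 → ℝ :=
  Real.sqrt (-(deriv f u) / (2 * deriv g u)) •
    ((φ v * Real.cos v) • e1 + (φ v * Real.sin v) • e2 +
      ((deriv f u * (φ v) ^ 2 - 2 * deriv g u) / (2 * deriv f u)) • xi1 + xi2)

/-- The curvature `κ_m(u) = (f'g'' − g'f'')/(−2f'g')^{3/2}` of the meridians. -/
def kappam (f g : ℝ → ℝ) (u : ℝ) : ℝ :=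
  (deriv f u * deriv (deriv g) u - deriv g u * deriv (deriv f) u) /
    (-2 * deriv f u * deriv g u) ^ ((3 : ℝ) / 2)

/-- The curvature `κ̄(v) = (φφ̈ − 2φ̇² − φ²)/(φ̇² + φ²)^{3/2}`. -/
def kappabar (φ : ℝ → ℝ) (v : ℝ) : ℝ :=
  (φ v * deriv (deriv φ) v - 2 * (deriv φ v) ^ 2 - (φ v) ^ 2) /
    ((deriv φ v) ^ 2 + (φ v) ^ 2) ^ ((3 : ℝ) / 2)

/-- The mean curvature vector
`H = (1/2)(⟨z_uu,n₁⟩/E + ⟨z_vv,n₁⟩/G) n₁ − (1/2)(⟨z_uu,n₂⟩/E + ⟨z_vv,n₂⟩/G) n₂`,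
where `E = ⟨z_u,z_u⟩` and `G = ⟨z_v,z_v⟩`. -/
def Hvec (f g φ : ℝ → ℝ) (u v : ℝ) : Fin 4 → ℝ :=
  (1 / 2 * (mink (zuu f g φ u v) (n1 φ v) / mink (zu f g φ u v) (zu f g φ u v) +
      mink (zvv f g φ u v) (n1 φ v) / mink (zv f g φ u v) (zv f g φ u v))) • n1 φ v -
  (1 / 2 * (mink (zuu f g φ u v) (n2 f g φ u v) / mink (zu f g φ u v) (zu f g φ u v) +
      mink (zvv f g φ u v) (n2 f g φ u v) / mink (zv f g φ u v) (zv f g φ u v))) • n2 f g φ u v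

section Aux
open Real Filter

def V (a b c d : ℝ) : Fin 4 → ℝ := a • e1 + b • e2 + c • xi1 + d • xi2

lemma mink_V (a b c d a' b' c' d' : ℝ) :
    mink (V a b c d) (V a' b' c' d') = a * a' + b * b' - (c * d' + d * c') := by
  have h2 : Real.sqrt 2 * Real.sqrt 2 = 2 := Real.mul_self_sqrt (by norm_num)
  have h0 : Real.sqrt 2 ≠ 0 := by positivity
  simp only [V, mink, e1, e2, xi1, xi2, Pi.add_apply, Pi.smul_apply, smul_eq_mul,
    Matrix.cons_val_zero, Matrix.cons_val_one, Matrix.head_cons]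
  simp only [Matrix.cons_val]
  norm_num [Matrix.cons_val_succ]
  field_simp
  rw [Real.sq_sqrt (by norm_num : (0:ℝ) ≤ 2)]
  ring

lemma mink_smul_left (k : ℝ) (x y : Fin 4 → ℝ) : mink (k • x) y = k * mink x y := by
  simp only [mink, Pi.smul_apply, smul_eq_mul]; ring

lemma mink_smul_right (k : ℝ) (x y : Fin 4 → ℝ) : mink x (k • y) = k * mink x y := by
  simp only [mink, Pi.smul_apply, smul_eq_mul]; ring

lemma mink_sub_left (x y w : Fin 4 → ℝ) : mink (x - y) w = mink x w - mink y w := by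
  simp only [mink, Pi.sub_apply]; ring

lemma mink_sub_right (x y w : Fin 4 → ℝ) : mink w (x - y) = mink w x - mink w y := by
  simp only [mink, Pi.sub_apply]; ring

lemma hasDerivAt_V {c1 c2 c3 c4 : ℝ → ℝ} {d1 d2 d3 d4 : ℝ} {t : ℝ}
    (h1 : HasDerivAt c1 d1 t) (h2 : HasDerivAt c2 d2 t)
    (h3 : HasDerivAt c3 d3 t) (h4 : HasDerivAt c4 d4 t) :
    HasDerivAt (fun s => V (c1 s) (c2 s) (c3 s) (c4 s)) (V d1 d2 d3 d4) t :=
  (((h1.smul_const e1).add (h2.smul_const e2)).add (h3.smul_const xi1)).add (h4.smul_const xi2)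

lemma n1_eq (φ : ℝ → ℝ) (v : ℝ) :
    n1 φ v = (Real.sqrt ((deriv φ v) ^ 2 + (φ v) ^ 2))⁻¹ •
      V (deriv φ v * Real.sin v + φ v * Real.cos v)
        (-(deriv φ v) * Real.cos v + φ v * Real.sin v) ((φ v) ^ 2) 0 := by
  simp [n1, V]

end Aux
lemma scalar_final (u p q N w S R : ℝ) (hun : u ≠ 0) (hpn : p ≠ 0)
    (hSn : S ≠ 0) (hRn : R ≠ 0) (hS2 : S ^ 2 = w) (hR2 : R ^ 2 = -1 / (2 * p)) :
    1 / 2 * (0 / (-2 * p) + S⁻¹ * (u * N) / (u ^ 2 * w)) *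
          (1 / 2 * (0 / (-2 * p) + S⁻¹ * (u * N) / (u ^ 2 * w)) * 1) -
        1 / 2 * (0 / (-2 * p) + S⁻¹ * (u * N) / (u ^ 2 * w)) *
          (1 / 2 * (R * -q / (-2 * p) + R * -(u * w) / (u ^ 2 * w)) * 0) -
      (1 / 2 * (R * -q / (-2 * p) + R * -(u * w) / (u ^ 2 * w)) *
          (1 / 2 * (0 / (-2 * p) + S⁻¹ * (u * N) / (u ^ 2 * w)) * 0) -
        1 / 2 * (R * -q / (-2 * p) + R * -(u * w) / (u ^ 2 * w)) *
          (1 / 2 * (R * -q / (-2 * p) + R * -(u * w) / (u ^ 2 * w)) * (-1))) =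
      ((u * q - 2 * p) ^ 2 + 8 * p ^ 3 * (N / (S * w)) ^ 2) / (32 * p ^ 3 * u ^ 2) := by
  have hw : w = S ^ 2 := hS2.symm
  subst hw
  have hp2 : p = -1 / (2 * R ^ 2) := by
    have h : R ^ 2 * (2 * p) = -1 := by
      rw [hR2]; field_simp
    field_simp
    linarith [h]
  subst hp2
  field_simp
  ring
section Key
open Real Filter

lemma key (I J : Set ℝ) (hIopen : IsOpen I) (hIpos : I ⊆ Set.Ioi (0 : ℝ))
    (hJopen : IsOpen J) (g φ : ℝ → ℝ)
    (hg : ContDiffOn ℝ (⊤ : ℕ∞) g I) (hφ : ContDiffOn ℝ (⊤ : ℕ∞) φ J)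
    (hgd : ∀ u ∈ I, deriv g u < 0)
    (hφpos : ∀ v ∈ J, 0 < (deriv φ v) ^ 2 + (φ v) ^ 2)
    {u v : ℝ} (hu : u ∈ I) (hv : v ∈ J) :
    mink (Hvec (fun t => t) g φ u v) (Hvec (fun t => t) g φ u v) =
      ((u * deriv (deriv g) u - 2 * deriv g u) ^ 2
        + 8 * (deriv g u) ^ 3 * (kappabar φ v) ^ 2) / (32 * (deriv g u) ^ 3 * u ^ 2) := by
  have hu0 : 0 < u := hIpos hu
  have hp : deriv g u < 0 := hgd u hu
  have hw : 0 < (deriv φ v) ^ 2 + (φ v) ^ 2 := hφpos v hv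
  have hgC : ContDiffOn ℝ (⊤ : ℕ∞) (deriv g) I := hg.deriv_of_isOpen hIopen (by norm_num)
  have hφC : ContDiffOn ℝ (⊤ : ℕ∞) (deriv φ) J := hφ.deriv_of_isOpen hJopen (by norm_num)
  have hg1 : ∀ t ∈ I, HasDerivAt g (deriv g t) t := fun t ht =>
    ((hg.contDiffAt (hIopen.mem_nhds ht)).differentiableAt (by norm_num)).hasDerivAt
  have hg2 : HasDerivAt (deriv g) (deriv (deriv g) u) u :=
    ((hgC.contDiffAt (hIopen.mem_nhds hu)).differentiableAt (by norm_num)).hasDerivAt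
  have hφ1 : ∀ t ∈ J, HasDerivAt φ (deriv φ t) t := fun t ht =>
    ((hφ.contDiffAt (hJopen.mem_nhds ht)).differentiableAt (by norm_num)).hasDerivAt
  have hφ2 : HasDerivAt (deriv φ) (deriv (deriv φ) v) v :=
    ((hφC.contDiffAt (hJopen.mem_nhds hv)).differentiableAt (by norm_num)).hasDerivAt
  -- first derivatives
  have zu_fun : ∀ t ∈ I, zu (fun x => x) g φ t v =
      V (φ v * Real.cos v) (φ v * Real.sin v) ((φ v) ^ 2 / 2 + deriv g t) 1 := by
    intro t ht
    have h1 : HasDerivAt (fun s : ℝ => s * φ v * Real.cos v) (φ v * Real.cos v) t := by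
      simpa using ((hasDerivAt_id t).mul_const (φ v)).mul_const (Real.cos v)
    have h2 : HasDerivAt (fun s : ℝ => s * φ v * Real.sin v) (φ v * Real.sin v) t := by
      simpa using ((hasDerivAt_id t).mul_const (φ v)).mul_const (Real.sin v)
    have h3 : HasDerivAt (fun s : ℝ => s * (φ v) ^ 2 / 2 + g s) ((φ v) ^ 2 / 2 + deriv g t) t := by
      simpa [Pi.add_def] using (((hasDerivAt_id t).mul_const ((φ v) ^ 2)).div_const 2).add (hg1 t ht)
    have h4 : HasDerivAt (fun s : ℝ => s) 1 t := hasDerivAt_id t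
    have hfun : (fun s => z (fun x => x) g φ s v) =
        (fun s => V (s * φ v * Real.cos v) (s * φ v * Real.sin v) (s * (φ v) ^ 2 / 2 + g s) s) :=
      rfl
    rw [zu, hfun]
    exact (hasDerivAt_V h1 h2 h3 h4).deriv
  have zv_fun : ∀ t ∈ J, zv (fun x => x) g φ u t =
      V (u * (deriv φ t * Real.cos t - φ t * Real.sin t))
        (u * (deriv φ t * Real.sin t + φ t * Real.cos t)) (u * (φ t * deriv φ t)) 0 := by
    intro t ht
    have k1 : HasDerivAt (fun s => u * φ s * Real.cos s)
        (u * (deriv φ t * Real.cos t - φ t * Real.sin t)) t := by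
      have := ((hφ1 t ht).const_mul u).mul (Real.hasDerivAt_cos t)
      convert this using 1
      all_goals first | rfl | ring
    have k2 : HasDerivAt (fun s => u * φ s * Real.sin s)
        (u * (deriv φ t * Real.sin t + φ t * Real.cos t)) t := by
      have := ((hφ1 t ht).const_mul u).mul (Real.hasDerivAt_sin t)
      convert this using 1
      all_goals first | rfl | ring
    have k3 : HasDerivAt (fun s => u * (φ s) ^ 2 / 2 + g u) (u * (φ t * deriv φ t)) t := by
      have := ((((hφ1 t ht).pow 2).const_mul u).div_const 2).add_const (g u)
      convert this using 1
      all_goals first | rfl | ring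
    have k4 : HasDerivAt (fun _ : ℝ => u) 0 t := hasDerivAt_const t u
    have hfun : (fun s => z (fun x => x) g φ u s) =
        (fun s => V (u * φ s * Real.cos s) (u * φ s * Real.sin s) (u * (φ s) ^ 2 / 2 + g u) u) :=
      rfl
    rw [zv, hfun]
    exact (hasDerivAt_V k1 k2 k3 k4).deriv
  -- second derivatives
  have zuu_eq : zuu (fun x => x) g φ u v = V 0 0 (deriv (deriv g) u) 0 := by
    have hev : (fun t => zu (fun x => x) g φ t v) =ᶠ[nhds u]
        (fun t => V (φ v * Real.cos v) (φ v * Real.sin v) ((φ v) ^ 2 / 2 + deriv g t) 1) := by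
      filter_upwards [hIopen.mem_nhds hu] with t ht using zu_fun t ht
    rw [zuu, hev.deriv_eq]
    have h3 : HasDerivAt (fun t => (φ v) ^ 2 / 2 + deriv g t) (deriv (deriv g) u) u := by
      exact hg2.const_add _
    exact (hasDerivAt_V (hasDerivAt_const u _) (hasDerivAt_const u _) h3
      (hasDerivAt_const u _)).deriv
  have zvv_eq : zvv (fun x => x) g φ u v =
      V (u * (deriv (deriv φ) v * Real.cos v - 2 * deriv φ v * Real.sin v - φ v * Real.cos v))
        (u * (deriv (deriv φ) v * Real.sin v + 2 * deriv φ v * Real.cos v - φ v * Real.sin v))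
        (u * ((deriv φ v) ^ 2 + φ v * deriv (deriv φ) v)) 0 := by
    have hev : (fun t => zv (fun x => x) g φ u t) =ᶠ[nhds v]
        (fun t => V (u * (deriv φ t * Real.cos t - φ t * Real.sin t))
          (u * (deriv φ t * Real.sin t + φ t * Real.cos t)) (u * (φ t * deriv φ t)) 0) := by
      filter_upwards [hJopen.mem_nhds hv] with t ht using zv_fun t ht
    rw [zvv, hev.deriv_eq]
    have m1 : HasDerivAt (fun t => u * (deriv φ t * Real.cos t - φ t * Real.sin t))
        (u * (deriv (deriv φ) v * Real.cos v - 2 * deriv φ v * Real.sin v - φ v * Real.cos v))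
        v := by
      have := ((hφ2.mul (Real.hasDerivAt_cos v)).sub
        ((hφ1 v hv).mul (Real.hasDerivAt_sin v))).const_mul u
      convert this using 1
      all_goals first | rfl | ring
    have m2 : HasDerivAt (fun t => u * (deriv φ t * Real.sin t + φ t * Real.cos t))
        (u * (deriv (deriv φ) v * Real.sin v + 2 * deriv φ v * Real.cos v - φ v * Real.sin v))
        v := by
      have := ((hφ2.mul (Real.hasDerivAt_sin v)).add
        ((hφ1 v hv).mul (Real.hasDerivAt_cos v))).const_mul u
      convert this using 1
      all_goals first | rfl | ring
    have m3 : HasDerivAt (fun t => u * (φ t * deriv φ t))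
        (u * ((deriv φ v) ^ 2 + φ v * deriv (deriv φ) v)) v := by
      have := (((hφ1 v hv).mul hφ2)).const_mul u
      convert this using 1
      all_goals first | rfl | ring
    exact (hasDerivAt_V m1 m2 m3 (hasDerivAt_const v 0)).deriv
  -- the second normal field with f = id
  have hdf : deriv (fun t : ℝ => t) u = 1 := deriv_id u
  have n2_eq : n2 (fun t => t) g φ u v = (Real.sqrt (-1 / (2 * deriv g u))) •
      V (φ v * Real.cos v) (φ v * Real.sin v) (((φ v) ^ 2 - 2 * deriv g u) / 2) 1 := by
    rw [n2, hdf]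
    norm_num [V]
  have hcs : Real.sin v ^ 2 + Real.cos v ^ 2 = 1 := Real.sin_sq_add_cos_sq v
  have hun : u ≠ 0 := ne_of_gt hu0
  have hpn : deriv g u ≠ 0 := ne_of_lt hp
  have hwn : (deriv φ v) ^ 2 + (φ v) ^ 2 ≠ 0 := ne_of_gt hw
  have hSn : Real.sqrt ((deriv φ v) ^ 2 + (φ v) ^ 2) ≠ 0 := by positivity
  have hSS : Real.sqrt ((deriv φ v) ^ 2 + (φ v) ^ 2) * Real.sqrt ((deriv φ v) ^ 2 + (φ v) ^ 2)
      = (deriv φ v) ^ 2 + (φ v) ^ 2 := Real.mul_self_sqrt hw.le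
  have hRarg : 0 < -1 / (2 * deriv g u) := by
    apply div_pos_of_neg_of_neg (by norm_num)
    linarith
  have hRn : Real.sqrt (-1 / (2 * deriv g u)) ≠ 0 := by positivity
  have hRR : Real.sqrt (-1 / (2 * deriv g u)) * Real.sqrt (-1 / (2 * deriv g u))
      = -1 / (2 * deriv g u) := Real.mul_self_sqrt hRarg.le
  have hrpow : ((deriv φ v) ^ 2 + (φ v) ^ 2) ^ ((3 : ℝ) / 2) =
      Real.sqrt ((deriv φ v) ^ 2 + (φ v) ^ 2) * ((deriv φ v) ^ 2 + (φ v) ^ 2) := by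
    rw [show (3 : ℝ) / 2 = 1 / 2 + 1 by norm_num, Real.rpow_add hw, Real.rpow_one,
      Real.sqrt_eq_rpow]
  have hk : kappabar φ v =
      (φ v * deriv (deriv φ) v - 2 * (deriv φ v) ^ 2 - (φ v) ^ 2) /
        (Real.sqrt ((deriv φ v) ^ 2 + (φ v) ^ 2) * ((deriv φ v) ^ 2 + (φ v) ^ 2)) := by
    rw [kappabar, hrpow]
  -- mink computations
  have hE : mink (zu (fun t => t) g φ u v) (zu (fun t => t) g φ u v) = -2 * deriv g u := by
    rw [zu_fun u hu, mink_V]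
    linear_combination (φ v) ^ 2 * hcs
  have hG : mink (zv (fun t => t) g φ u v) (zv (fun t => t) g φ u v) =
      u ^ 2 * ((deriv φ v) ^ 2 + (φ v) ^ 2) := by
    rw [zv_fun v hv, mink_V]
    linear_combination u ^ 2 * ((deriv φ v) ^ 2 + (φ v) ^ 2) * hcs
  have hc1 : mink (zuu (fun t => t) g φ u v) (n1 φ v) = 0 := by
    rw [zuu_eq, n1_eq, mink_smul_right, mink_V]
    ring
  have hc2 : mink (zvv (fun t => t) g φ u v) (n1 φ v) =
      (Real.sqrt ((deriv φ v) ^ 2 + (φ v) ^ 2))⁻¹ *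
        (u * (φ v * deriv (deriv φ) v - 2 * (deriv φ v) ^ 2 - (φ v) ^ 2)) := by
    rw [zvv_eq, n1_eq, mink_smul_right, mink_V]
    linear_combination ((Real.sqrt ((deriv φ v) ^ 2 + (φ v) ^ 2))⁻¹ *
      (u * (φ v * deriv (deriv φ) v) - 2 * u * (deriv φ v) ^ 2 - u * (φ v) ^ 2)) * hcs
  have hc3 : mink (zuu (fun t => t) g φ u v) (n2 (fun t => t) g φ u v) =
      Real.sqrt (-1 / (2 * deriv g u)) * (-(deriv (deriv g) u)) := by
    rw [zuu_eq, n2_eq, mink_smul_right, mink_V]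
    ring
  have hc4 : mink (zvv (fun t => t) g φ u v) (n2 (fun t => t) g φ u v) =
      Real.sqrt (-1 / (2 * deriv g u)) * (-(u * ((deriv φ v) ^ 2 + (φ v) ^ 2))) := by
    rw [zvv_eq, n2_eq, mink_smul_right, mink_V]
    linear_combination (Real.sqrt (-1 / (2 * deriv g u)) *
      (u * (φ v * deriv (deriv φ) v) - u * (φ v) ^ 2)) * hcs
  have hM11 : mink (n1 φ v) (n1 φ v) = 1 := by
    rw [n1_eq, mink_smul_left, mink_smul_right, mink_V]
    field_simp
    linear_combination ((deriv φ v) ^ 2 + (φ v) ^ 2) * hcs - Real.sq_sqrt hw.le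
  have hM22 : mink (n2 (fun t => t) g φ u v) (n2 (fun t => t) g φ u v) = -1 := by
    rw [n2_eq, mink_smul_left, mink_smul_right, mink_V]
    have hRR' : Real.sqrt (-1 / (2 * deriv g u)) * Real.sqrt (-1 / (2 * deriv g u)) *
        (2 * deriv g u) = -1 := by
      rw [hRR]; field_simp
    linear_combination (Real.sqrt (-1 / (2 * deriv g u)) *
      Real.sqrt (-1 / (2 * deriv g u)) * (φ v) ^ 2) * hcs + hRR'
  have hM12 : mink (n1 φ v) (n2 (fun t => t) g φ u v) = 0 := by
    rw [n1_eq, n2_eq, mink_smul_left, mink_smul_right, mink_V]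
    linear_combination ((Real.sqrt ((deriv φ v) ^ 2 + (φ v) ^ 2))⁻¹ *
      Real.sqrt (-1 / (2 * deriv g u)) * (φ v) ^ 2) * hcs
  have hM21 : mink (n2 (fun t => t) g φ u v) (n1 φ v) = 0 := by
    rw [n1_eq, n2_eq, mink_smul_left, mink_smul_right, mink_V]
    linear_combination ((Real.sqrt ((deriv φ v) ^ 2 + (φ v) ^ 2))⁻¹ *
      Real.sqrt (-1 / (2 * deriv g u)) * (φ v) ^ 2) * hcs
  -- expand Hvec and finish
  rw [Hvec]
  simp only [mink_sub_left, mink_sub_right, mink_smul_left, mink_smul_right]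
  rw [hE, hG, hc1, hc2, hc3, hc4, hM11, hM12, hM21, hM22, hk]
  have hfin := scalar_final u (deriv g u) (deriv (deriv g) u)
    (φ v * deriv (deriv φ) v - 2 * (deriv φ v) ^ 2 - (φ v) ^ 2)
    ((deriv φ v) ^ 2 + (φ v) ^ 2) (Real.sqrt ((deriv φ v) ^ 2 + (φ v) ^ 2))
    (Real.sqrt (-1 / (2 * deriv g u))) hun hpn hSn hRn
    (Real.sq_sqrt hw.le) (Real.sq_sqrt hRarg.le)
  linear_combination hfin

end Key
section ODE
open Real Filter

lemma const_of_hasDerivAt_zero {s : Set ℝ} (hc : IsPreconnected s)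
    {f : ℝ → ℝ} (hf : ∀ x ∈ s, HasDerivAt f 0 x) {x y : ℝ} (hx : x ∈ s) (hy : y ∈ s) :
    f x = f y := by
  have hconv : Convex ℝ s := hc.ordConnected.convex
  have h := Convex.norm_image_sub_le_of_norm_hasDerivWithin_le
    (C := 0) (f' := fun _ => (0 : ℝ)) (fun z hz => (hf z hz).hasDerivWithinAt)
    (fun z hz => by simp) hconv hx hy
  rw [zero_mul] at h
  have := norm_le_zero_iff.mp h
  have := sub_eq_zero.mp this
  exact this.symm

lemma sign_const_of_sq_const {s : Set ℝ} (ho : IsOpen s) (hc : IsPreconnected s)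
    {ψ : ℝ → ℝ} (hcont : ContinuousOn ψ s) {a : ℝ} (ha : a ≠ 0)
    (hsq : ∀ x ∈ s, ψ x ^ 2 = a ^ 2) {x y : ℝ} (hx : x ∈ s) (hy : y ∈ s) : ψ x = ψ y := by
  have hmem : ∀ z ∈ s, ψ z = a ∨ ψ z = -a := by
    intro z hz
    have h : (ψ z - a) * (ψ z + a) = 0 := by linear_combination hsq z hz
    rcases mul_eq_zero.mp h with h' | h'
    · exact Or.inl (by linarith)
    · exact Or.inr (by linarith)
  by_contra hne
  have hball : ∀ z : ℝ, z ∈ Metric.ball a |a| → z ∈ Metric.ball (-a) |a| → False := by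
    intro z h1 h2
    rw [Metric.mem_ball, Real.dist_eq] at h1 h2
    have : |a - (-a)| ≤ |a - z| + |z - (-a)| := abs_sub_le _ _ _
    rw [abs_sub_comm a z] at this
    have h3 : |a - -a| = 2 * |a| := by
      rw [show a - -a = 2 * a by ring, abs_mul]
      norm_num
    linarith
  have hO1 : IsOpen (s ∩ ψ ⁻¹' Metric.ball a |a|) :=
    hcont.isOpen_inter_preimage ho Metric.isOpen_ball
  have hO2 : IsOpen (s ∩ ψ ⁻¹' Metric.ball (-a) |a|) :=
    hcont.isOpen_inter_preimage ho Metric.isOpen_ball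
  have hcover : s ⊆ (s ∩ ψ ⁻¹' Metric.ball a |a|) ∪ (s ∩ ψ ⁻¹' Metric.ball (-a) |a|) := by
    intro z hz
    rcases hmem z hz with h | h
    · exact Or.inl ⟨hz, by simp [h, Metric.mem_ball, abs_pos.mpr ha]⟩
    · exact Or.inr ⟨hz, by simp [h, Metric.mem_ball, abs_pos.mpr ha]⟩
  have hne1 : (s ∩ (s ∩ ψ ⁻¹' Metric.ball a |a|)).Nonempty := by
    rcases hmem x hx with h | h
    · exact ⟨x, hx, hx, by simp [h, Metric.mem_ball, abs_pos.mpr ha]⟩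
    · rcases hmem y hy with h' | h'
      · exact ⟨y, hy, hy, by simp [h', Metric.mem_ball, abs_pos.mpr ha]⟩
      · exact absurd (h.trans h'.symm) hne
  have hne2 : (s ∩ (s ∩ ψ ⁻¹' Metric.ball (-a) |a|)).Nonempty := by
    rcases hmem x hx with h | h
    · rcases hmem y hy with h' | h'
      · exact absurd (h.trans h'.symm) hne
      · exact ⟨y, hy, hy, by simp [h', Metric.mem_ball, abs_pos.mpr ha]⟩
    · exact ⟨x, hx, hx, by simp [h, Metric.mem_ball, abs_pos.mpr ha]⟩
  obtain ⟨z, _, ⟨_, hz1⟩, ⟨_, hz2⟩⟩ := hc _ _ hO1 hO2 hcover hne1 hne2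
  exact hball _ hz1 hz2

/-- derivative of the model function Φ. -/
lemma hasDerivAt_Phi (a c : ℝ) (ha : a ≠ 0) {t : ℝ} (hD : 0 < c - a * t) :
    HasDerivAt (fun x => 1 / (2 * a ^ 3) *
        ((a ^ 2 * x ^ 2 - 2 * a * x * c) / (c - a * x) - 2 * c * Real.log (c - a * x)))
      (-t ^ 2 / (2 * (c - a * t) ^ 2)) t := by
  have hDn : c - a * t ≠ 0 := ne_of_gt hD
  have hlin : HasDerivAt (fun x : ℝ => c - a * x) (-a) t := by
    simpa using ((hasDerivAt_id t).const_mul a).const_sub c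
  have hnum : HasDerivAt (fun x : ℝ => a ^ 2 * x ^ 2 - 2 * a * x * c)
      (2 * a ^ 2 * t - 2 * a * c) t := by
    have h1 : HasDerivAt (fun x : ℝ => a ^ 2 * x ^ 2) (a ^ 2 * (2 * t)) t := by
      simpa using (hasDerivAt_pow 2 t).const_mul (a ^ 2)
    have h2 : HasDerivAt (fun x : ℝ => 2 * a * x * c) (2 * a * c) t := by
      simpa using ((hasDerivAt_id t).const_mul (2 * a)).mul_const c
    have := h1.sub h2
    convert this using 1
    all_goals first | rfl | ring
  have hdiv := hnum.div hlin hDn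
  have hlog : HasDerivAt (fun x : ℝ => Real.log (c - a * x)) (-a / (c - a * t)) t :=
    hlin.log hDn
  have htot := (hdiv.sub (hlog.const_mul (2 * c))).const_mul (1 / (2 * a ^ 3))
  convert htot using 1 <;> try rfl
  field_simp
  ring

end ODE
section Main
open Real Filter

/-- auxiliary: the derivative of `u ↦ u/√(-2g'(u))`. -/
def psi (g : ℝ → ℝ) (t : ℝ) : ℝ :=
  (t * deriv (deriv g) t - 2 * deriv g t) / ((-2 * deriv g t) * Real.sqrt (-2 * deriv g t))

/-- auxiliary: the model function. -/
def Phi (a c : ℝ) (x : ℝ) : ℝ :=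
  1 / (2 * a ^ 3) * ((a ^ 2 * x ^ 2 - 2 * a * x * c) / (c - a * x) -
    2 * c * Real.log (c - a * x))

lemma psi_formula (p q u s : ℝ) (hpn : p ≠ 0) (hs : s * s = -2 * p) (hsn : s ≠ 0) :
    (u * q - 2 * p) / ((-2 * p) * s) = (1 * s - u * (-2 * q / (2 * s))) / s ^ 2 := by
  field_simp
  linear_combination (-u * q) * hs

lemma hasDerivAt_Phi' (a c : ℝ) (ha : a ≠ 0) {t : ℝ} (hD : 0 < c - a * t) :
    HasDerivAt (Phi a c) (-t ^ 2 / (2 * (c - a * t) ^ 2)) t := hasDerivAt_Phi a c ha hD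

end Main
/-- classification of marginally trapped general meridian surfaces of
parabolic type: with `f(u) = u` on `I ⊂ (0,∞)`, `g' < 0`, `g'' ≠ 0` (i.e. `κ_m ≠ 0`)
and `κ̄ ≠ 0`, the meridian surface of parabolic type is marginally trapped if and only if
there exist constants `a ≠ 0`, `b`, `c ≠ 0` with `c − au > 0` on `I` such that
`κ̄² = a²` on `J` and
`g(u) = (1/(2a³))((a²u² − 2auc)/(c − au) − 2c ln(c − au)) + b` on `I`. -/
theorem statement8
    (I J : Set ℝ) (hIopen : IsOpen I) (hIconn : IsPreconnected I) (hIne : I.Nonempty)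
    (hIpos : I ⊆ Set.Ioi (0 : ℝ))
    (hJopen : IsOpen J) (hJconn : IsPreconnected J) (hJne : J.Nonempty)
    (g φ : ℝ → ℝ)
    (hg : ContDiffOn ℝ (⊤ : ℕ∞) g I) (hφ : ContDiffOn ℝ (⊤ : ℕ∞) φ J)
    (hgd : ∀ u ∈ I, deriv g u < 0)
    (hgdd : ∀ u ∈ I, deriv (deriv g) u ≠ 0)
    (hφpos : ∀ v ∈ J, 0 < (deriv φ v) ^ 2 + (φ v) ^ 2)
    (hκbar : ∀ v ∈ J, kappabar φ v ≠ 0) :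
    (∀ u ∈ I, ∀ v ∈ J,
        mink (Hvec (fun t => t) g φ u v) (Hvec (fun t => t) g φ u v) = 0) ↔
      ∃ a b c : ℝ, a ≠ 0 ∧ c ≠ 0 ∧ (∀ u ∈ I, 0 < c - a * u) ∧
        (∀ v ∈ J, (kappabar φ v) ^ 2 = a ^ 2) ∧
        ∀ u ∈ I, g u =
          1 / (2 * a ^ 3) *
            ((a ^ 2 * u ^ 2 - 2 * a * u * c) / (c - a * u) -
              2 * c * Real.log (c - a * u)) + b := by
  have hgC : ContDiffOn ℝ (⊤ : ℕ∞) (deriv g) I := hg.deriv_of_isOpen hIopen (by norm_num)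
  have hg1 : ∀ t ∈ I, HasDerivAt g (deriv g t) t := fun t ht =>
    ((hg.contDiffAt (hIopen.mem_nhds ht)).differentiableAt (by norm_num)).hasDerivAt
  have hg2 : ∀ t ∈ I, HasDerivAt (deriv g) (deriv (deriv g) t) t := fun t ht =>
    ((hgC.contDiffAt (hIopen.mem_nhds ht)).differentiableAt (by norm_num)).hasDerivAt
  obtain ⟨u₀, hu₀⟩ := hIne
  obtain ⟨v₀, hv₀⟩ := hJne
  have hKEY : ∀ u ∈ I, ∀ v ∈ J,
      (mink (Hvec (fun t => t) g φ u v) (Hvec (fun t => t) g φ u v) = 0 ↔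
        (u * deriv (deriv g) u - 2 * deriv g u) ^ 2
          + 8 * (deriv g u) ^ 3 * (kappabar φ v) ^ 2 = 0) := by
    intro u hu v hv
    have hdenne : 32 * (deriv g u) ^ 3 * u ^ 2 ≠ 0 :=
      mul_ne_zero (mul_ne_zero (by norm_num) (pow_ne_zero _ (ne_of_lt (hgd u hu))))
        (pow_ne_zero _ (ne_of_gt (hIpos hu)))
    rw [key I J hIopen hIpos hJopen g φ hg hφ hgd hφpos hu hv, div_eq_zero_iff]
    constructor
    · rintro (h | h)
      · exact h
      · exact absurd h hdenne
    · exact fun h => Or.inl h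
  constructor
  · -- forward direction
    intro h
    have ha₀ : kappabar φ v₀ ≠ 0 := hκbar v₀ hv₀
    have cond : ∀ u ∈ I, ∀ v ∈ J, (u * deriv (deriv g) u - 2 * deriv g u) ^ 2
        = -8 * (deriv g u) ^ 3 * (kappabar φ v) ^ 2 := by
      intro u hu v hv
      have := (hKEY u hu v hv).mp (h u hu v hv)
      linarith
    have hκ : ∀ v ∈ J, (kappabar φ v) ^ 2 = (kappabar φ v₀) ^ 2 := by
      intro v hv
      have h1 := cond u₀ hu₀ v hv
      have h2 := cond u₀ hu₀ v₀ hv₀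
      have hX : (-8 * (deriv g u₀) ^ 3) ≠ 0 :=
        mul_ne_zero (by norm_num) (pow_ne_zero _ (ne_of_lt (hgd u₀ hu₀)))
      have h3 : (-8 * (deriv g u₀) ^ 3) * (kappabar φ v) ^ 2
          = (-8 * (deriv g u₀) ^ 3) * (kappabar φ v₀) ^ 2 := by
        linear_combination h2 - h1
      exact mul_left_cancel₀ hX h3
    have hODE : ∀ u ∈ I, (u * deriv (deriv g) u - 2 * deriv g u) ^ 2
        = -8 * (deriv g u) ^ 3 * (kappabar φ v₀) ^ 2 := fun u hu => cond u hu v₀ hv₀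
    -- derivative of F(t) = t / sqrt(-2 g'(t))
    have hψF : ∀ u ∈ I, HasDerivAt (fun t => t / Real.sqrt (-2 * deriv g t)) (psi g u) u := by
      intro u hu
      have hp := hgd u hu
      have hD : 0 < -2 * deriv g u := by linarith
      have hDne : -2 * deriv g u ≠ 0 := ne_of_gt hD
      have hder : HasDerivAt (fun t => -2 * deriv g t) (-2 * deriv (deriv g) u) u :=
        (hg2 u hu).const_mul (-2)
      have hsq : HasDerivAt (fun t => Real.sqrt (-2 * deriv g t))
          ((-2 * deriv (deriv g) u) / (2 * Real.sqrt (-2 * deriv g u))) u := hder.sqrt hDne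
      have hsqne : Real.sqrt (-2 * deriv g u) ≠ 0 :=
        ne_of_gt (Real.sqrt_pos.mpr hD)
      have hss : Real.sqrt (-2 * deriv g u) * Real.sqrt (-2 * deriv g u) = -2 * deriv g u :=
        Real.mul_self_sqrt hD.le
      have hdiv := (hasDerivAt_id u).div hsq hsqne
      convert hdiv using 1 <;> try rfl
      simp only [id_eq]
      rw [psi]
      exact psi_formula (deriv g u) (deriv (deriv g) u) u (Real.sqrt (-2 * deriv g u))
        (ne_of_lt hp) hss hsqne
    -- continuity of psi on I
    have hψcont : ContinuousOn (psi g) I := by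
      have hqC' : ContDiffOn ℝ (⊤ : ℕ∞) (deriv (deriv g)) I :=
        hgC.deriv_of_isOpen hIopen (by norm_num)
      have hqC : ContinuousOn (deriv (deriv g)) I := hqC'.continuousOn
      have hpC : ContinuousOn (deriv g) I := hgC.continuousOn
      apply ContinuousOn.div
      · exact (continuousOn_id.mul hqC).sub (continuousOn_const.mul hpC)
      · exact (continuousOn_const.mul hpC).mul
          (Real.continuous_sqrt.comp_continuousOn (continuousOn_const.mul hpC))
      · intro t ht
        have hp := hgd t ht
        have hD : (0 : ℝ) < -2 * deriv g t := by linarith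
        exact ne_of_gt (mul_pos hD (Real.sqrt_pos.mpr hD))
    -- psi squared is constant
    have hψsq : ∀ u ∈ I, psi g u ^ 2 = (kappabar φ v₀) ^ 2 := by
      intro u hu
      have hp := hgd u hu
      have hD : 0 < -2 * deriv g u := by linarith
      have hss : Real.sqrt (-2 * deriv g u) * Real.sqrt (-2 * deriv g u) = -2 * deriv g u :=
        Real.mul_self_sqrt hD.le
      have hsqne : Real.sqrt (-2 * deriv g u) ≠ 0 := ne_of_gt (Real.sqrt_pos.mpr hD)
      have hpn : deriv g u ≠ 0 := ne_of_lt hp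
      rw [psi, div_pow, hODE u hu]
      rw [mul_pow, show Real.sqrt (-2 * deriv g u) ^ 2 = -2 * deriv g u by
        rw [sq]; exact hss]
      field_simp
      ring
    have hψc : ∀ u ∈ I, psi g u = psi g u₀ := fun u hu =>
      sign_const_of_sq_const hIopen hIconn hψcont ha₀ hψsq hu hu₀
    have hA2 : psi g u₀ ^ 2 = (kappabar φ v₀) ^ 2 := hψsq u₀ hu₀
    have hAne : psi g u₀ ≠ 0 := by
      intro h0
      apply ha₀
      have h2 : kappabar φ v₀ ^ 2 = 0 := by rw [← hA2, h0]; ring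
      exact pow_eq_zero_iff (n := 2) (by norm_num) |>.mp h2
    set A := psi g u₀ with hAdef
    set cc := u₀ / Real.sqrt (-2 * deriv g u₀) + -A * u₀ with hccdef
    have hFlin : ∀ u ∈ I, u / Real.sqrt (-2 * deriv g u) = cc - -A * u := by
      intro u hu
      have hzero : ∀ x ∈ I, HasDerivAt (fun t => t / Real.sqrt (-2 * deriv g t) - A * t) 0 x := by
        intro x hx
        have h1 := (hψF x hx).sub ((hasDerivAt_id x).const_mul A)
        have h2 : psi g x - A * 1 = 0 := by rw [hψc x hx]; ring
        rwa [h2] at h1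
      have hconst := const_of_hasDerivAt_zero hIconn hzero hu hu₀
      try simp only at hconst
      rw [hccdef]
      linarith [hconst]
    have hDpos : ∀ u ∈ I, 0 < cc - -A * u := by
      intro u hu
      rw [← hFlin u hu]
      exact div_pos (hIpos hu) (Real.sqrt_pos.mpr (by linarith [hgd u hu]))
    have hp_val : ∀ u ∈ I, deriv g u = -u ^ 2 / (2 * (cc - -A * u) ^ 2) := by
      intro u hu
      have hp := hgd u hu
      have hD : 0 < -2 * deriv g u := by linarith
      have hss : Real.sqrt (-2 * deriv g u) * Real.sqrt (-2 * deriv g u) = -2 * deriv g u :=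
        Real.mul_self_sqrt hD.le
      have hDne : cc - -A * u ≠ 0 := ne_of_gt (hDpos u hu)
      have hsn : Real.sqrt (-2 * deriv g u) ≠ 0 := ne_of_gt (Real.sqrt_pos.mpr hD)
      have h1 := hFlin u hu
      rw [div_eq_iff hsn] at h1
      have hsq : Real.sqrt (-2 * deriv g u) = u / (cc - -A * u) := by
        rw [eq_div_iff hDne]
        linear_combination -h1
      have h2 : u ^ 2 = (cc - -A * u) ^ 2 * (-2 * deriv g u) := by
        have h3 := congrArg (fun x : ℝ => x ^ 2) h1
        simp only [mul_pow] at h3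
        have h4 : Real.sqrt (-2 * deriv g u) ^ 2 = -2 * deriv g u := Real.sq_sqrt hD.le
        linear_combination h3 + (cc - -A * u) ^ 2 * h4
      rw [eq_div_iff (by positivity : (2 : ℝ) * (cc - -A * u) ^ 2 ≠ 0)]
      linear_combination h2
    refine ⟨-A, g u₀ - Phi (-A) cc u₀, cc, neg_ne_zero.mpr hAne, ?_, hDpos, ?_, ?_⟩
    · -- cc ≠ 0
      intro hc0
      apply hgdd u₀ hu₀
      have hconst : ∀ t ∈ I, deriv g t = -1 / (2 * A ^ 2) := by
        intro t ht
        have hval := hp_val t ht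
        rw [hc0] at hval
        rw [hval]
        have htne : t ≠ 0 := ne_of_gt (hIpos ht)
        field_simp
        ring
      have hev : deriv g =ᶠ[nhds u₀] (fun _ => -1 / (2 * A ^ 2)) := by
        filter_upwards [hIopen.mem_nhds hu₀] with t ht using hconst t ht
      rw [hev.deriv_eq]
      exact deriv_const _ _
    · -- kappabar squared constant
      intro v hv
      rw [hκ v hv, ← hA2]
      ring
    · -- the formula for g
      intro u hu
      have hzero : ∀ x ∈ I, HasDerivAt (fun t => g t - Phi (-A) cc t) 0 x := by
        intro x hx
        have h1 := (hg1 x hx).sub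
          (hasDerivAt_Phi' (-A) cc (neg_ne_zero.mpr hAne) (hDpos x hx))
        have h2 : deriv g x - -x ^ 2 / (2 * (cc - -A * x) ^ 2) = 0 := by
          rw [hp_val x hx]; ring
        rwa [h2] at h1
      have hconst := const_of_hasDerivAt_zero hIconn hzero hu hu₀
      try simp only at hconst
      have hPhi : (1 : ℝ) / (2 * (-A) ^ 3) * (((-A) ^ 2 * u ^ 2 - 2 * -A * u * cc) /
          (cc - -A * u) - 2 * cc * Real.log (cc - -A * u)) = Phi (-A) cc u := rfl
      rw [hPhi]
      linarith [hconst]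
  · -- backward direction
    rintro ⟨a, b, c, ha, hc, hD, hκ, hgf⟩ u hu v hv
    have hDu : 0 < c - a * u := hD u hu
    have hDune : c - a * u ≠ 0 := ne_of_gt hDu
    have hgd1 : ∀ t ∈ I, deriv g t = -t ^ 2 / (2 * (c - a * t) ^ 2) := by
      intro t ht
      have hev : g =ᶠ[nhds t] (fun x => Phi a c x + b) := by
        filter_upwards [hIopen.mem_nhds ht] with s hs using hgf s hs
      rw [hev.deriv_eq]
      exact ((hasDerivAt_Phi' a c ha (hD t ht)).add_const b).deriv
    have hgd2 : deriv (deriv g) u = -(u * c) / (c - a * u) ^ 3 := by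
      have hev : deriv g =ᶠ[nhds u] (fun t => -t ^ 2 / (2 * (c - a * t) ^ 2)) := by
        filter_upwards [hIopen.mem_nhds hu] with t ht using hgd1 t ht
      rw [hev.deriv_eq]
      have hlin : HasDerivAt (fun x : ℝ => c - a * x) (-a) u := by
        simpa using ((hasDerivAt_id u).const_mul a).const_sub c
      have hden : HasDerivAt (fun x : ℝ => 2 * (c - a * x) ^ 2)
          (2 * (2 * (c - a * u) ^ 1 * (-a))) u := (hlin.pow 2).const_mul 2
      have hnum : HasDerivAt (fun x : ℝ => -x ^ 2) (-(2 * u ^ 1)) u := (hasDerivAt_pow 2 u).neg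
      have hdenne : 2 * (c - a * u) ^ 2 ≠ 0 := by positivity
      have := (hnum.div hden hdenne).deriv
      erw [this]
      field_simp
      ring
    rw [hKEY u hu v hv, hgd1 u hu, hgd2, hκ v hv]
    field_simp
    ring

end
end MeridianParabolic
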